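/- Let M be a graphic matroid, T ⊆ E(M), and suppose the splitting matroid M_T has a minor isomorphic to a fixed matroid F. Then M has a minor N with T ⊆ E(N) and subsets T₁', T₂' of T with T₁' ∩ T₂' = ∅ such that N_T \ T₁' / T₂' ≅ F. In particular the witnessing deletions and contractions outside T can be pushed through the splitting operation. -/

import Mathlib

open scoped Classical

namespace PaperSplit

variable {α β : Type}

/-- `A` is a matrix representation (columns indexed by `α`, rows by `η`) of the
matroid `M` over `GF(2)`, with ground set `E`. -/
def RepresentsOn {η : Type} (A : α → η → ZMod 2) (E : Set α) (M : Matroid α) : Prop :=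
  M.E = E ∧ ∀ I ⊆ E, (M.Indep I ↔ LinearIndependent (ZMod 2) (fun i : I => A i.1))

/-- The columns of the matrix `A_T`: one extra row (indexed by `none`) is appended,
with entry `1` exactly in the columns of `T`. -/
noncomputable def splitCols {η : Type} (A : α → η → ZMod 2) (T : Set α) :
    α → Option η → ZMod 2 :=
  fun a o => Option.elim o (if a ∈ T then 1 else 0) (A a)

/-- `MT` is the splitting matroid of `M` with respect to `T`. -/
def IsSplitting (M : Matroid α) (T : Set α) (MT : Matroid α) : Prop :=
  ∃ (η : Type) (A : α → η → ZMod 2),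
    RepresentsOn A M.E M ∧ RepresentsOn (splitCols A T) M.E MT

/-- `M` is a binary matroid. -/
def IsBinary (M : Matroid α) : Prop :=
  ∃ (η : Type) (A : α → η → ZMod 2), RepresentsOn A M.E M

/-- Deletion of a set of elements. -/
def del (M : Matroid α) (D : Set α) : Matroid α := M.restrict (M.E \ D)

/-- Contraction of a set of elements. -/
def con (M : Matroid α) (C : Set α) : Matroid α := (del M.dual C).dual

/-- `N` is a minor of `M`. -/
def IsMinorOf (N M : Matroid α) : Prop := ∃ X Y, Disjoint X Y ∧ N = con (del M X) Y

/-- `C` is a circuit (minimal dependent set) of `M`. -/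
def circuit (M : Matroid α) (C : Set α) : Prop :=
  C ⊆ M.E ∧ ¬ M.Indep C ∧ ∀ D ⊂ C, M.Indep D

/-- `C` is a cocircuit of `M`, i.e. a circuit of the dual. -/
def cocircuit (M : Matroid α) (C : Set α) : Prop := circuit M.dual C

def isLoop (M : Matroid α) (e : α) : Prop := circuit M {e}

def isColoop (M : Matroid α) (e : α) : Prop := isLoop M.dual e

/-- Matroid isomorphism. -/
def MIso (M : Matroid α) (N : Matroid β) : Prop :=
  ∃ e : M.E ≃ N.E, ∀ I : Set M.E,
    M.Indep (Subtype.val '' I) ↔ N.Indep (Subtype.val '' (e '' I))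

/-- A graphic matroid: one represented over `GF(2)` by a vertex–edge incidence
matrix (each column is zero or the sum of two distinct standard basis vectors). -/
def IsGraphic (M : Matroid α) : Prop :=
  ∃ (V : Type) (A : α → V → ZMod 2), RepresentsOn A M.E M ∧
    ∀ a ∈ M.E, A a = 0 ∨ ∃ u v : V, u ≠ v ∧
      A a = fun w => (if w = u then (1 : ZMod 2) else 0) + (if w = v then 1 else 0)

def IsCographic (M : Matroid α) : Prop := IsGraphic M.dual

/-- A multigraph with vertex type `V` and edge type `E`. -/
structure Multigraph (V E : Type) where
  ends : E → Sym2 V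

/-- The mod-2 vertex–edge incidence matrix of a multigraph. -/
noncomputable def Multigraph.inc {V E : Type} (G : Multigraph V E) : E → V → ZMod 2 :=
  fun e v => if G.ends e = Sym2.mk v v then 0 else if v ∈ G.ends e then 1 else 0

/-- `M` is the cycle matroid of the multigraph `G`. -/
def IsCycleMatroidOf {V E : Type} (G : Multigraph V E) (M : Matroid E) : Prop :=
  RepresentsOn G.inc Set.univ M

def Multigraph.Adj {V E : Type} (G : Multigraph V E) (u v : V) : Prop :=
  ∃ e, G.ends e = Sym2.mk u v

def Multigraph.Connected {V E : Type} (G : Multigraph V E) : Prop :=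
  Nonempty V ∧ ∀ u v : V, Relation.ReflTransGen G.Adj u v

noncomputable def Multigraph.degree {V E : Type} (G : Multigraph V E) (v : V) : ℕ :=
  Nat.card {e | v ∈ G.ends e ∧ ¬ (G.ends e).IsDiag} +
    2 * Nat.card {e | G.ends e = Sym2.mk v v}

def Multigraph.Eulerian {V E : Type} (G : Multigraph V E) : Prop :=
  G.Connected ∧ ∀ v, Even (G.degree v)

/-- The Fano matroid `F₇`: represented over `GF(2)` by the seven distinct
nonzero vectors of `GF(2)³`. -/
def IsFano (M : Matroid (Fin 7)) : Prop :=
  ∃ A : Fin 7 → Fin 3 → ZMod 2, RepresentsOn A Set.univ M ∧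
    Function.Injective A ∧ ∀ i, A i ≠ 0

/-- The complete graph `K₅` as a multigraph. -/
def K5 : Multigraph (Fin 5) {p : Sym2 (Fin 5) // ¬ p.IsDiag} := ⟨fun e => e.1⟩

/-- The complete bipartite graph `K₃,₃` as a multigraph. -/
def K33 : Multigraph (Fin 3 ⊕ Fin 3) (Fin 3 × Fin 3) :=
  ⟨fun e => Sym2.mk (Sum.inl e.1) (Sum.inr e.2)⟩

open Set Submodule

lemma del_ground (M : Matroid α) (D : Set α) : (del M D).E = M.E \ D := rfl

lemma con_ground (M : Matroid α) (C : Set α) : (con M C).E = M.E \ C := rfl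

lemma del_indep_iff {M : Matroid α} {D I : Set α} :
    (del M D).Indep I ↔ M.Indep I ∧ I ⊆ M.E \ D := Matroid.restrict_indep_iff

lemma del_base_iff {M : Matroid α} {D B : Set α} :
    (del M D).IsBase B ↔ M.IsBasis B (M.E \ D) :=
  Matroid.isBase_restrict_iff diff_subset

lemma del_basis_iff {M : Matroid α} {D B X : Set α} (hX : X ⊆ M.E \ D) :
    (del M D).IsBasis B X ↔ M.IsBasis B X :=
  (Matroid.isBasis_restrict_iff diff_subset).trans (and_iff_left hX)

lemma del_inter_ground (M : Matroid α) (D : Set α) : del M (D ∩ M.E) = del M D := by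
  unfold del
  congr 1
  rw [Set.diff_inter_self_eq_diff]

lemma con_inter_ground (M : Matroid α) (C : Set α) : con M (C ∩ M.E) = con M C := by
  unfold con
  rw [show C ∩ M.E = C ∩ M.dual.E from rfl, del_inter_ground]

/-- Independence in a contraction: `I` is independent in `M/C` iff it avoids `C` and
`I ∪ B` is independent for some basis `B` of `C`. -/
lemma con_indep_iff {M : Matroid α} {C : Set α} (hC : C ⊆ M.E) (I : Set α) :
    (con M C).Indep I ↔ I ⊆ M.E \ C ∧ ∃ B, M.IsBasis B C ∧ M.Indep (I ∪ B) := by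
  constructor
  · intro h
    obtain ⟨hIE, B₁, hB₁, hdj⟩ := Matroid.dual_indep_iff_exists'.1 h
    rw [del_base_iff] at hB₁
    have hIE' : I ⊆ M.E \ C := hIE
    refine ⟨hIE', ?_⟩
    obtain ⟨Bs, hBs, hB₁Bs⟩ := hB₁.indep.exists_isBase_superset
    have hint : Bs ∩ (M✶.E \ C) = B₁ :=
      (hB₁.eq_of_subset_indep (hBs.indep.subset inter_subset_left)
        (subset_inter hB₁Bs hB₁.subset) inter_subset_right).symm
    have hbasis : M✶.IsBasis (Bs ∩ (M✶.E \ C)) (M✶.E \ C) := hint ▸ hB₁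
    have h2 := (hBs.inter_isBasis_iff_compl_inter_isBasis_dual diff_subset).1 hbasis
    rw [Matroid.dual_dual, Matroid.dual_ground,
      Set.diff_diff_cancel_left hC] at h2
    have hBbase : M.IsBase (M.E \ Bs) := hBs.compl_isBase_of_dual
    refine ⟨(M.E \ Bs) ∩ C, h2, hBbase.indep.subset ?_⟩
    refine union_subset ?_ inter_subset_left
    intro x hx
    refine ⟨(hIE' hx).1, fun hxBs => ?_⟩
    have : x ∈ Bs ∩ (M✶.E \ C) := ⟨hxBs, hIE' hx⟩
    rw [hint] at this
    exact hdj.ne_of_mem hx this rfl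
  · rintro ⟨hIE, B, hB, hIB⟩
    obtain ⟨Bb, hBb, hIBBb⟩ := hIB.exists_isBase_superset
    have hBC : Bb ∩ C = B :=
      (hB.eq_of_subset_indep (hBb.indep.subset inter_subset_left)
        (subset_inter (subset_union_right.trans hIBBb) hB.subset) inter_subset_right).symm
    have hbasis : M.IsBasis (Bb ∩ C) C := hBC ▸ hB
    have h2 := (hBb.inter_isBasis_iff_compl_inter_isBasis_dual hC).1 hbasis
    refine Matroid.dual_indep_iff_exists'.2 ⟨hIE, (M.E \ Bb) ∩ (M.E \ C), ?_, ?_⟩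
    · rw [del_base_iff]
      exact h2
    · exact Set.disjoint_left.2 fun x hx hx' =>
        hx'.1.2 (hIBBb (subset_union_left hx))
lemma del_del (M : Matroid α) (D₁ D₂ : Set α) :
    del (del M D₁) D₂ = del M (D₁ ∪ D₂) := by
  unfold del
  rw [Matroid.restrict_ground_eq, diff_diff,
    Matroid.restrict_restrict_eq _ (diff_subset_diff_right subset_union_left)]

lemma con_dual (M : Matroid α) (C : Set α) : (con M C)✶ = del M✶ C := by
  unfold con
  rw [Matroid.dual_dual]

lemma con_con (M : Matroid α) (C₁ C₂ : Set α) :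
    con (con M C₁) C₂ = con M (C₁ ∪ C₂) := by
  show ((con M C₁)✶.restrict _)✶ = _
  rw [show (con M C₁)✶.restrict ((con M C₁)✶.E \ C₂) = del (con M C₁)✶ C₂ from rfl,
    con_dual, del_del]
  rfl

lemma del_con_comm (M : Matroid α) {C D : Set α} (hC : C ⊆ M.E) (hD : D ⊆ M.E)
    (hCD : Disjoint C D) : del (con M C) D = con (del M D) C := by
  have hCD' : C ⊆ M.E \ D := subset_diff.2 ⟨hC, hCD⟩
  refine Matroid.ext_indep ?_ fun I hI => ?_
  · rw [del_ground, con_ground, con_ground, del_ground, diff_diff_comm]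
  rw [del_ground, con_ground, diff_diff_comm] at hI
  rw [del_indep_iff, con_ground, con_indep_iff hC,
    con_indep_iff (M := del M D) (by rwa [del_ground])]
  rw [del_ground, diff_diff_comm]
  constructor
  · rintro ⟨⟨hIE, B, hB, hIB⟩, hI2⟩
    refine ⟨hI2, B, (del_basis_iff hCD').2 hB, del_indep_iff.2 ⟨hIB, union_subset
      (hI2.trans diff_subset) (hB.subset.trans hCD')⟩⟩
  · rintro ⟨hIE, B, hB, hIB⟩
    rw [del_basis_iff hCD'] at hB
    rw [del_indep_iff] at hIB
    refine ⟨⟨?_, B, hB, hIB.1⟩, hIE⟩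
    intro x hx
    exact ⟨(hIE hx).1.1, (hIE hx).2⟩
section LinAlg

variable {R : Type*} [Field R] {W W' : Type*} [AddCommGroup W] [Module R W]
  [AddCommGroup W'] [Module R W']

lemma li_comp_iff {κ : Type*} (f : W →ₗ[R] W') (v : κ → W) :
    LinearIndependent R (f ∘ v) ↔
      LinearIndependent R v ∧ Disjoint (span R (Set.range v)) (LinearMap.ker f) :=
  ⟨fun h => ⟨h.of_comp f, Submodule.range_ker_disjoint h⟩,
   fun ⟨h1, h2⟩ => h1.map h2⟩

lemma li_union_iff {A : α → W} {I B : Set α} (hIB : Disjoint I B) :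
    LinearIndependent R (fun x : ↥(I ∪ B) => A x) ↔
      (LinearIndependent R (fun x : I => A x) ∧ LinearIndependent R (fun x : B => A x) ∧
        Disjoint (span R (A '' I)) (span R (A '' B))) := by
  have hcomp : (Sum.elim (fun x : I => A x) (fun x : B => A x)) ∘ (Equiv.Set.union hIB) =
      fun x : ↥(I ∪ B) => A x := by
    funext x
    simp only [Function.comp_apply]
    by_cases h : (x : α) ∈ I
    · rw [Equiv.Set.union_apply_left hIB h]; rfl
    · rw [Equiv.Set.union_apply_right hIB (x.2.resolve_left h)]; rfl
  rw [← hcomp, linearIndependent_equiv (Equiv.Set.union hIB), linearIndependent_sum,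
    Sum.elim_comp_inl, Sum.elim_comp_inr, ← Set.image_eq_range, ← Set.image_eq_range]

end LinAlg
lemma span_basis {η : Type} {M : Matroid α} {A : α → η → ZMod 2}
    (hA : RepresentsOn A M.E M) {B Y : Set α} (hY : Y ⊆ M.E) (hB : M.IsBasis B Y) :
    span (ZMod 2) (A '' B) = span (ZMod 2) (A '' Y) := by
  refine le_antisymm (span_mono (Set.image_mono hB.subset)) (span_le.2 ?_)
  rintro _ ⟨y, hy, rfl⟩
  by_cases h : y ∈ B
  · exact subset_span ⟨y, h, rfl⟩
  have hyE : y ∈ M.E := hY hy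
  have hBE : B ⊆ M.E := hB.subset.trans hY
  have hni : ¬ M.Indep (insert y B) := fun hind => h (by
    have heq := hB.eq_of_subset_indep hind (Set.subset_insert _ _)
      (Set.insert_subset hy hB.subset)
    rw [heq]; exact Set.mem_insert _ _)
  rw [hA.2 (insert y B) (Set.insert_subset hyE hBE)] at hni
  rw [show (LinearIndependent (ZMod 2) fun i : ↑(insert y B) => A ↑i) ↔ _ from
    linearIndepOn_insert (f := A) h] at hni
  have hBli : LinearIndependent (ZMod 2) (fun x : B => A x.1) :=
    (hA.2 B hBE).1 hB.indep
  by_contra hmem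
  exact hni ⟨hBli, hmem⟩

lemma rep_con_del {η η' : Type} {M : Matroid α} {A : α → η → ZMod 2}
    (hA : RepresentsOn A M.E M) {X' Y' : Set α} (hX' : X' ⊆ M.E) (hY' : Y' ⊆ M.E)
    (hYX : Disjoint Y' X') (f : (η → ZMod 2) →ₗ[ZMod 2] (η' → ZMod 2))
    (hker : LinearMap.ker f = span (ZMod 2) (A '' Y')) :
    RepresentsOn (fun a => f (A a)) ((M.E \ X') \ Y') (con (del M X') Y') := by
  have hgd : (con (del M X') Y').E = (M.E \ X') \ Y' := rfl
  have hY'sub : Y' ⊆ (del M X').E := by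
    rw [del_ground]; exact Set.subset_diff.2 ⟨hY', hYX⟩
  refine ⟨hgd, fun I hI => ?_⟩
  have hIE : I ⊆ M.E := fun x hx => ((hI hx).1).1
  have hli : LinearIndependent (ZMod 2) (fun i : I => f (A i.1)) ↔
      LinearIndependent (ZMod 2) (fun i : I => A i.1) ∧
        Disjoint (span (ZMod 2) (A '' I)) (span (ZMod 2) (A '' Y')) := by
    have h0 := li_comp_iff (R := ZMod 2) f (fun i : I => A i.1)
    rw [hker, ← Set.image_eq_range] at h0
    exact h0
  rw [con_indep_iff hY'sub]
  show _ ↔ LinearIndependent (ZMod 2) (fun i : I => f (A i.1))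
  rw [hli]
  constructor
  · rintro ⟨hIE2, B, hB, hIB⟩
    rw [del_basis_iff hY'sub] at hB
    rw [del_indep_iff] at hIB
    have hIBE : I ∪ B ⊆ M.E := Set.union_subset hIE (hB.subset.trans hY')
    have hliu := (hA.2 (I ∪ B) hIBE).1 hIB.1
    have hIBdj : Disjoint I B := Set.disjoint_left.2 fun x hx hxB =>
      (hI hx).2 (hB.subset hxB)
    rw [li_union_iff hIBdj] at hliu
    exact ⟨hliu.1, (span_basis hA hY' hB) ▸ hliu.2.2⟩
  · rintro ⟨h1, h2⟩
    obtain ⟨B, hB⟩ := M.exists_isBasis Y' hY'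
    have hIBdj : Disjoint I B := Set.disjoint_left.2 fun x hx hxB =>
      (hI hx).2 (hB.subset hxB)
    have hBli : LinearIndependent (ZMod 2) (fun x : B => A x.1) :=
      (hA.2 B (hB.subset.trans hY')).1 hB.indep
    have hliu : LinearIndependent (ZMod 2) (fun x : ↥(I ∪ B) => A x.1) :=
      (li_union_iff hIBdj).2 ⟨h1, hBli, (span_basis hA hY' hB) ▸ h2⟩
    have hIBE : I ∪ B ⊆ M.E := Set.union_subset hIE (hB.subset.trans hY')
    refine ⟨hI, B, (del_basis_iff hY'sub).2 hB, del_indep_iff.2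
      ⟨(hA.2 (I ∪ B) hIBE).2 hliu, Set.union_subset (fun x hx => (hI hx).1)
        (hB.subset.trans hY'sub)⟩⟩
section Maps

variable {η η' : Type}

/-- Coordinates of the quotient by `U`, as a linear map to a function type. -/
noncomputable def coordMap (U : Submodule (ZMod 2) (η → ZMod 2)) :
    (η → ZMod 2) →ₗ[ZMod 2]
      (Module.Free.ChooseBasisIndex (ZMod 2) ((η → ZMod 2) ⧸ U) → ZMod 2) :=
  Finsupp.lcoeFun.comp
    (((Module.Free.chooseBasis (ZMod 2) ((η → ZMod 2) ⧸ U)).repr.toLinearMap).comp U.mkQ)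

lemma ker_coordMap (U : Submodule (ZMod 2) (η → ZMod 2)) :
    LinearMap.ker (coordMap U) = U := by
  ext w
  simp only [coordMap, LinearMap.mem_ker, LinearMap.comp_apply, LinearEquiv.coe_coe]
  constructor
  · intro h
    have h1 : ((Module.Free.chooseBasis (ZMod 2) ((η → ZMod 2) ⧸ U)).repr (U.mkQ w)) = 0 :=
      DFunLike.coe_injective h
    have h2 : U.mkQ w = 0 := by
      simpa using (Module.Free.chooseBasis (ZMod 2) ((η → ZMod 2) ⧸ U)).repr.map_eq_zero_iff.1 h1
    rwa [Submodule.mkQ_apply, Submodule.Quotient.mk_eq_zero] at h2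
  · intro h
    have h2 : U.mkQ w = 0 := by rwa [Submodule.mkQ_apply, Submodule.Quotient.mk_eq_zero]
    rw [h2]
    simp [Finsupp.lcoeFun]

/-- The linear map on the extended (split) coordinates induced by `f`. -/
noncomputable def splitMap (f : (η → ZMod 2) →ₗ[ZMod 2] (η' → ZMod 2)) :
    (Option η → ZMod 2) →ₗ[ZMod 2] (Option η' → ZMod 2) :=
  LinearMap.pi (fun o => Option.elim o (LinearMap.proj none)
    (fun i => (LinearMap.proj i).comp (f.comp (LinearMap.funLeft (ZMod 2) (ZMod 2) some))))

lemma splitMap_apply_none (f : (η → ZMod 2) →ₗ[ZMod 2] (η' → ZMod 2))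
    (g : Option η → ZMod 2) : splitMap f g none = g none := rfl

lemma splitMap_apply_some (f : (η → ZMod 2) →ₗ[ZMod 2] (η' → ZMod 2))
    (g : Option η → ZMod 2) (i : η') : splitMap f g (some i) = f (g ∘ some) i := rfl

lemma splitMap_comp_splitCols (A : α → η → ZMod 2) (T : Set α)
    (f : (η → ZMod 2) →ₗ[ZMod 2] (η' → ZMod 2)) :
    (fun a => splitMap f (splitCols A T a)) = splitCols (fun a => f (A a)) T := by
  funext a o
  cases o with
  | none => rfl
  | some i => rfl

lemma ker_splitMap {A : α → η → ZMod 2} {T Y' : Set α} (hY'T : Disjoint Y' T)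
    (f : (η → ZMod 2) →ₗ[ZMod 2] (η' → ZMod 2))
    (hker : LinearMap.ker f = span (ZMod 2) (A '' Y')) :
    LinearMap.ker (splitMap f) = span (ZMod 2) ((splitCols A T) '' Y') := by
  apply le_antisymm
  · intro g hg
    rw [LinearMap.mem_ker] at hg
    have hnone : g none = 0 := by
      rw [← splitMap_apply_none f g, hg]; rfl
    have hsome : f (g ∘ some) = 0 := by
      funext i
      rw [← splitMap_apply_some f g i, hg]; rfl
    have hmem : (g ∘ some) ∈ span (ZMod 2) (A '' Y') := by
      rw [← hker]; exact hsome
    rw [Finsupp.mem_span_image_iff_linearCombination] at hmem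
    obtain ⟨l, hl, hl2⟩ := hmem
    rw [Finsupp.mem_span_image_iff_linearCombination]
    refine ⟨l, hl, ?_⟩
    funext o
    rw [Finsupp.linearCombination_apply, Finsupp.sum, Finset.sum_apply]
    cases o with
    | none =>
      rw [hnone]
      refine Finset.sum_eq_zero fun i hi => ?_
      have hiY : i ∈ Y' := (Finsupp.mem_supported _ l).1 hl hi
      have hz : splitCols A T i none = 0 := by
        simp only [splitCols, Option.elim]
        rw [if_neg (Set.disjoint_left.1 hY'T hiY)]
      rw [Pi.smul_apply, hz, smul_zero]
    | some e =>
      have he := congrFun hl2 e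
      rw [Finsupp.linearCombination_apply, Finsupp.sum, Finset.sum_apply] at he
      rw [show g (some e) = (g ∘ some) e from rfl, ← he]
      refine Finset.sum_congr rfl fun i _ => ?_
      rw [Pi.smul_apply, Pi.smul_apply]
      rfl
  · rw [span_le]
    rintro _ ⟨y, hy, rfl⟩
    rw [SetLike.mem_coe, LinearMap.mem_ker]
    funext o
    cases o with
    | none =>
      rw [splitMap_apply_none]
      simp [splitCols, Set.disjoint_left.1 hY'T hy]
    | some i =>
      rw [splitMap_apply_some]
      have : (splitCols A T y) ∘ some = A y := rfl
      rw [this]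
      have : A y ∈ LinearMap.ker f := by
        rw [hker]; exact subset_span ⟨y, hy, rfl⟩
      rw [LinearMap.mem_ker] at this
      rw [this]; rfl

end Maps

/-- If `M` is graphic and `M_T` has a minor isomorphic to `F`, then
`M` has a minor `N` containing `T` and disjoint subsets `T₁', T₂'` of `T` with
`N_T \ T₁' / T₂' ≅ F`. -/
theorem splitting_minor_pushthrough {α β : Type} (M MT : Matroid α) (F : Matroid β)
    (T : Set α)
    (hgr : IsGraphic M) (hT : T ⊆ M.E) (hsplit : IsSplitting M T MT)
    (hminor : ∃ X Y, Disjoint X Y ∧ MIso (con (del MT X) Y) F) :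
    ∃ N : Matroid α, IsMinorOf N M ∧ T ⊆ N.E ∧
      ∃ T₁ T₂ : Set α, T₁ ⊆ T ∧ T₂ ⊆ T ∧ Disjoint T₁ T₂ ∧
        ∃ NT : Matroid α, IsSplitting N T NT ∧ MIso (con (del NT T₁) T₂) F := by
  obtain ⟨X₀, Y₀, hXY₀, hiso₀⟩ := hminor
  obtain ⟨η, A, hA, hAT⟩ := hsplit
  have hMTE : MT.E = M.E := hAT.1
  set X : Set α := X₀ ∩ M.E with hXdef
  set Y : Set α := Y₀ ∩ M.E with hYdef
  have hXY : Disjoint X Y := hXY₀.mono Set.inter_subset_left Set.inter_subset_left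
  have hXE : X ⊆ M.E := Set.inter_subset_right
  have hYE : Y ⊆ M.E := Set.inter_subset_right
  -- replace X₀, Y₀ by X, Y in the isomorphism
  have hdelX : del MT X = del MT X₀ := by
    rw [hXdef, ← hMTE, del_inter_ground]
  have hconY : con (del MT X) Y = con (del MT X₀) Y₀ := by
    rw [hdelX]
    have h1 : Y ∩ (del MT X₀).E = Y₀ ∩ (del MT X₀).E := by
      rw [del_ground, hYdef, hMTE]
      ext x
      simp only [Set.mem_inter_iff, Set.mem_diff]
      tauto
    rw [← con_inter_ground (del MT X₀) Y, h1, con_inter_ground]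
  have hiso : MIso (con (del MT X) Y) F := by rw [hconY]; exact hiso₀
  clear hiso₀ hconY hdelX hXY₀
  -- the pieces
  set X' : Set α := X \ T with hX'def
  set T₁ : Set α := X ∩ T with hT₁def
  set Y' : Set α := Y \ T with hY'def
  set T₂ : Set α := Y ∩ T with hT₂def
  have hX'E : X' ⊆ M.E := Set.diff_subset.trans hXE
  have hY'E : Y' ⊆ M.E := Set.diff_subset.trans hYE
  have hT₁E : T₁ ⊆ M.E := Set.inter_subset_left.trans hXE
  have hT₂E : T₂ ⊆ M.E := Set.inter_subset_left.trans hYE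
  have hY'X' : Disjoint Y' X' := (hXY.mono Set.diff_subset Set.diff_subset).symm
  have hY'T : Disjoint Y' T := Set.disjoint_left.2 fun x hx => hx.2
  have hX'T : Disjoint X' T := Set.disjoint_left.2 fun x hx => hx.2
  set N : Matroid α := con (del M X') Y' with hNdef
  set NT : Matroid α := con (del MT X') Y' with hNTdef
  have hNE : N.E = (M.E \ X') \ Y' := rfl
  refine ⟨N, ⟨X', Y', hY'X'.symm, rfl⟩, ?_, T₁, T₂, Set.inter_subset_right,
    Set.inter_subset_right, hXY.mono Set.inter_subset_left Set.inter_subset_left, NT, ?_, ?_⟩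
  · -- T ⊆ N.E
    rw [hNE]
    intro t ht
    exact ⟨⟨hT ht, fun h => (Set.disjoint_right.1 hX'T ht) h⟩,
      fun h => (Set.disjoint_right.1 hY'T ht) h⟩
  · -- IsSplitting N T NT
    set U : Submodule (ZMod 2) (η → ZMod 2) := span (ZMod 2) (A '' Y') with hUdef
    set f := coordMap U with hfdef
    have hkerf : LinearMap.ker f = span (ZMod 2) (A '' Y') := ker_coordMap U
    have hrepN := rep_con_del hA hX'E hY'E hY'X' f hkerf
    have hAT' : RepresentsOn (splitCols A T) MT.E MT := by rw [hMTE]; exact hAT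
    have hkerS : LinearMap.ker (splitMap f) =
        span (ZMod 2) ((splitCols A T) '' Y') := ker_splitMap hY'T f hkerf
    have hrepNT := rep_con_del hAT' (hMTE ▸ hX'E) (hMTE ▸ hY'E) hY'X' (splitMap f) hkerS
    rw [splitMap_comp_splitCols A T f] at hrepNT
    refine ⟨_, (fun a => f (A a)), ?_, ?_⟩
    · exact hrepN
    · have : (MT.E \ X') \ Y' = N.E := by rw [hMTE]; rfl
      rw [← this]
      exact hrepNT
  · -- the isomorphism
    have hY'sub : Y' ⊆ (del MT X').E := by
      rw [del_ground, hMTE]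
      exact Set.subset_diff.2 ⟨hY'E, hY'X'.symm.symm.mono_right le_rfl⟩
    have hT₁sub : T₁ ⊆ (del MT X').E := by
      rw [del_ground, hMTE]
      refine Set.subset_diff.2 ⟨hT₁E, Set.disjoint_left.2 fun x hx hx' => hx'.2 hx.2⟩
    have hstep1 : del NT T₁ = con (del MT (X' ∪ T₁)) Y' := by
      rw [hNTdef, del_con_comm (del MT X') hY'sub hT₁sub
        (Set.disjoint_left.2 fun x hx hx' => (Set.disjoint_left.1 hXY hx'.1) hx.1), del_del]
    have hXeq : X' ∪ T₁ = X := Set.diff_union_inter X T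
    have hYeq : Y' ∪ T₂ = Y := Set.diff_union_inter Y T
    have hfinal : con (del NT T₁) T₂ = con (del MT X) Y := by
      rw [hstep1, hXeq, con_con, hYeq]
    rw [hfinal]
    exact hiso

end PaperSplit
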